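/- Suppose x0, x1, x2, y0, y1, y2, ξ0, ξ1, ξ2, η0, η1, η2 : ℝ → ℝ are differentiable on (0,∞) and satisfy the M=2 system: s·x0' = −η0·x0 − x1, s·x1' = −η1·x0 − x2, s·x2' = −η2·x0 − s·x0 + ξ0·x0 + ξ1·x1 + ξ2·x2, s·y2' = −ξ2·y2 + y1, s·y1' = −ξ1·y2 + y0, s·y0' = −ξ0·y2 + s·y2 + η0·y0 + η1·y1 + η2·y2, ξ0' = −x0·y0, ξ1' = −x0·y1, ξ2' = −x0·y2, η0' = −x0·y2, η1' = −x1·y2, η2' = −x2·y2. Then (x0·y0 + x1·y1 + x2·y2)' = 0 on (0,∞). -/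

import Mathlib

open Set

theorem stmt_9 (x0 x1 x2 y0 y1 y2 ξ0 ξ1 ξ2 η0 η1 η2 : ℝ → ℝ)
    (hx0 : ∀ s ∈ Ioi (0:ℝ), DifferentiableAt ℝ x0 s)
    (hx1 : ∀ s ∈ Ioi (0:ℝ), DifferentiableAt ℝ x1 s)
    (hx2 : ∀ s ∈ Ioi (0:ℝ), DifferentiableAt ℝ x2 s)
    (hy0 : ∀ s ∈ Ioi (0:ℝ), DifferentiableAt ℝ y0 s)
    (hy1 : ∀ s ∈ Ioi (0:ℝ), DifferentiableAt ℝ y1 s)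
    (hy2 : ∀ s ∈ Ioi (0:ℝ), DifferentiableAt ℝ y2 s)
    (hξ0 : ∀ s ∈ Ioi (0:ℝ), DifferentiableAt ℝ ξ0 s)
    (hξ1 : ∀ s ∈ Ioi (0:ℝ), DifferentiableAt ℝ ξ1 s)
    (hξ2 : ∀ s ∈ Ioi (0:ℝ), DifferentiableAt ℝ ξ2 s)
    (hη0 : ∀ s ∈ Ioi (0:ℝ), DifferentiableAt ℝ η0 s)
    (hη1 : ∀ s ∈ Ioi (0:ℝ), DifferentiableAt ℝ η1 s)
    (hη2 : ∀ s ∈ Ioi (0:ℝ), DifferentiableAt ℝ η2 s)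
    (e1 : ∀ s ∈ Ioi (0:ℝ), s * deriv x0 s = -η0 s * x0 s - x1 s)
    (e2 : ∀ s ∈ Ioi (0:ℝ), s * deriv x1 s = -η1 s * x0 s - x2 s)
    (e3 : ∀ s ∈ Ioi (0:ℝ), s * deriv x2 s =
      -η2 s * x0 s - s * x0 s + ξ0 s * x0 s + ξ1 s * x1 s + ξ2 s * x2 s)
    (e4 : ∀ s ∈ Ioi (0:ℝ), s * deriv y2 s = -ξ2 s * y2 s + y1 s)
    (e5 : ∀ s ∈ Ioi (0:ℝ), s * deriv y1 s = -ξ1 s * y2 s + y0 s)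
    (e6 : ∀ s ∈ Ioi (0:ℝ), s * deriv y0 s =
      -ξ0 s * y2 s + s * y2 s + η0 s * y0 s + η1 s * y1 s + η2 s * y2 s)
    (e7 : ∀ s ∈ Ioi (0:ℝ), deriv ξ0 s = -(x0 s * y0 s))
    (e8 : ∀ s ∈ Ioi (0:ℝ), deriv ξ1 s = -(x0 s * y1 s))
    (e9 : ∀ s ∈ Ioi (0:ℝ), deriv ξ2 s = -(x0 s * y2 s))
    (e10 : ∀ s ∈ Ioi (0:ℝ), deriv η0 s = -(x0 s * y2 s))
    (e11 : ∀ s ∈ Ioi (0:ℝ), deriv η1 s = -(x1 s * y2 s))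
    (e12 : ∀ s ∈ Ioi (0:ℝ), deriv η2 s = -(x2 s * y2 s)) :
    ∀ s ∈ Ioi (0:ℝ),
      deriv (fun t => x0 t * y0 t + x1 t * y1 t + x2 t * y2 t) s = 0 := by
  intro s hs
  have d0 := hx0 s hs; have d1 := hx1 s hs; have d2 := hx2 s hs
  have f0 := hy0 s hs; have f1 := hy1 s hs; have f2 := hy2 s hs
  have hd : deriv (fun t => x0 t * y0 t + x1 t * y1 t + x2 t * y2 t) s =
      deriv x0 s * y0 s + x0 s * deriv y0 s + (deriv x1 s * y1 s + x1 s * deriv y1 s)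
        + (deriv x2 s * y2 s + x2 s * deriv y2 s) := by
    rw [deriv_fun_add ((d0.fun_mul f0).fun_add (d1.fun_mul f1)) (d2.fun_mul f2),
        deriv_fun_add (d0.fun_mul f0) (d1.fun_mul f1), deriv_fun_mul d0 f0, deriv_fun_mul d1 f1, deriv_fun_mul d2 f2]
  have hs0 : s ≠ 0 := ne_of_gt (mem_Ioi.mp hs)
  have key : s * deriv (fun t => x0 t * y0 t + x1 t * y1 t + x2 t * y2 t) s = s * 0 := by
    rw [hd]
    have E1 := e1 s hs; have E2 := e2 s hs; have E3 := e3 s hs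
    have E4 := e4 s hs; have E5 := e5 s hs; have E6 := e6 s hs
    linear_combination y0 s * E1 + x0 s * E6 + y1 s * E2 + x1 s * E5 + y2 s * E3 + x2 s * E4
  exact mul_left_cancel₀ hs0 key
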